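/- As complex Lie subalgebras of 𝔰𝔬(2n,ℂ), one has 𝔤𝔩(n,ℂ) + 𝔰𝔬(2n-1,ℂ) = 𝔰𝔬(2n,ℂ), where 𝔤𝔩(n,ℂ) is embedded via the complexification of the standard embedding U(n) ⊂ SO(2n) and 𝔰𝔬(2n-1,ℂ) is the subalgebra of matrices whose last row and column vanish. -/

import Mathlib

open Matrix

set_option maxHeartbeats 1000000

/-- The block-diagonal complex structure `J` on `ℂ^{2n}`, with `2×2` blocks `[[0,-1],[1,0]]`.
The image of `𝔤𝔩(n,ℂ)` in `𝔰𝔬(2n,ℂ)` (the complexification of `𝔲(n) ⊂ 𝔰𝔬(2n)` given by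
writing `a+bi` as the real block `[[a,-b],[b,a]]`) consists exactly of the skew-symmetric
matrices commuting with `J`. -/
def stdJ (n : ℕ) : Matrix (Fin (2 * n)) (Fin (2 * n)) ℂ :=
  Matrix.of fun i j =>
    if (i : ℕ) = (j : ℕ) + 1 ∧ (j : ℕ) % 2 = 0 then 1
    else if (j : ℕ) = (i : ℕ) + 1 ∧ (i : ℕ) % 2 = 0 then -1 else 0

/-- Last column of `M`, as a function on `ℕ`. -/
def vA (n : ℕ) (M : Matrix (Fin (2 * n)) (Fin (2 * n)) ℂ) (i : ℕ) : ℂ :=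
  if h : i < 2 * n then M ⟨i, h⟩ ⟨2 * n - 1, by omega⟩ else 0

/-- The entries of the correcting matrix `A`. -/
def fA (n : ℕ) (M : Matrix (Fin (2 * n)) (Fin (2 * n)) ℂ) (i j : ℕ) : ℂ :=
  if j = 2 * n - 1 then vA n M i
  else if j = 2 * n - 2 then (if i % 2 = 0 then vA n M (i + 1) else -vA n M (i - 1))
  else if i = 2 * n - 1 then -vA n M j
  else if i = 2 * n - 2 then (if j % 2 = 0 then -vA n M (j + 1) else vA n M (j - 1))
  else 0

lemma mul_stdJ_apply (n : ℕ) (g : ℕ → ℕ → ℂ) (i j : Fin (2 * n)) :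
    ((Matrix.of fun i j : Fin (2 * n) => g ↑i ↑j) * stdJ n) i j =
      if (j : ℕ) % 2 = 0 then g ↑i (↑j + 1) else -g ↑i (↑j - 1) := by
  rw [mul_apply]
  by_cases hj : (j : ℕ) % 2 = 0
  · rw [if_pos hj]
    have hlt : (j : ℕ) + 1 < 2 * n := by have := j.isLt; omega
    rw [Finset.sum_eq_single (⟨(j : ℕ) + 1, hlt⟩ : Fin (2 * n))]
    · have hval : ((⟨(j : ℕ) + 1, hlt⟩ : Fin (2 * n)) : ℕ) = (j : ℕ) + 1 := rfl
      have h1 : stdJ n ⟨(j : ℕ) + 1, hlt⟩ j = 1 := by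
        simp only [stdJ, of_apply, hval]
        rw [if_pos ⟨trivial, hj⟩]
      simp only [of_apply, h1, mul_one]
    · intro b _ hb
      have hb' : (b : ℕ) ≠ (j : ℕ) + 1 := fun hc => hb (Fin.ext hc)
      have hz : stdJ n b j = 0 := by
        simp only [stdJ, of_apply]
        split_ifs with h1 h2 <;> first | rfl | (exfalso; omega)
      simp only [of_apply, hz, mul_zero]
    · intro h; exact absurd (Finset.mem_univ _) h
  · rw [if_neg hj]
    have hlt : (j : ℕ) - 1 < 2 * n := by have := j.isLt; omega
    rw [Finset.sum_eq_single (⟨(j : ℕ) - 1, hlt⟩ : Fin (2 * n))]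
    · have hval : ((⟨(j : ℕ) - 1, hlt⟩ : Fin (2 * n)) : ℕ) = (j : ℕ) - 1 := rfl
      have h1 : stdJ n ⟨(j : ℕ) - 1, hlt⟩ j = -1 := by
        simp only [stdJ, of_apply, hval]
        rw [if_neg (fun h => hj h.2), if_pos ⟨by omega, by omega⟩]
      simp only [of_apply, h1, mul_neg, mul_one]
    · intro b _ hb
      have hb' : (b : ℕ) ≠ (j : ℕ) - 1 := fun hc => hb (Fin.ext hc)
      have hz : stdJ n b j = 0 := by
        simp only [stdJ, of_apply]
        split_ifs with h1 h2 <;> first | rfl | (exfalso; omega)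
      simp only [of_apply, hz, mul_zero]
    · intro h; exact absurd (Finset.mem_univ _) h

lemma stdJ_mul_apply (n : ℕ) (g : ℕ → ℕ → ℂ) (i j : Fin (2 * n)) :
    ((stdJ n) * (Matrix.of fun i j : Fin (2 * n) => g ↑i ↑j)) i j =
      if (i : ℕ) % 2 = 0 then -g (↑i + 1) ↑j else g (↑i - 1) ↑j := by
  rw [mul_apply]
  by_cases hi : (i : ℕ) % 2 = 0
  · rw [if_pos hi]
    have hlt : (i : ℕ) + 1 < 2 * n := by have := i.isLt; omega
    rw [Finset.sum_eq_single (⟨(i : ℕ) + 1, hlt⟩ : Fin (2 * n))]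
    · have hval : ((⟨(i : ℕ) + 1, hlt⟩ : Fin (2 * n)) : ℕ) = (i : ℕ) + 1 := rfl
      have h1 : stdJ n i ⟨(i : ℕ) + 1, hlt⟩ = -1 := by
        simp only [stdJ, of_apply, hval]
        rw [if_neg (by rintro ⟨h, -⟩; omega), if_pos ⟨trivial, hi⟩]
      simp only [of_apply, h1, neg_one_mul]
    · intro b _ hb
      have hb' : (b : ℕ) ≠ (i : ℕ) + 1 := fun hc => hb (Fin.ext hc)
      have hz : stdJ n i b = 0 := by
        simp only [stdJ, of_apply]
        split_ifs with h1 h2 <;> first | rfl | (exfalso; omega)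
      simp only [of_apply, hz, zero_mul]
    · intro h; exact absurd (Finset.mem_univ _) h
  · rw [if_neg hi]
    have hlt : (i : ℕ) - 1 < 2 * n := by have := i.isLt; omega
    rw [Finset.sum_eq_single (⟨(i : ℕ) - 1, hlt⟩ : Fin (2 * n))]
    · have hval : ((⟨(i : ℕ) - 1, hlt⟩ : Fin (2 * n)) : ℕ) = (i : ℕ) - 1 := rfl
      have h1 : stdJ n i ⟨(i : ℕ) - 1, hlt⟩ = 1 := by
        simp only [stdJ, of_apply, hval]
        rw [if_pos ⟨by omega, by omega⟩]
      simp only [of_apply, h1, one_mul]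
    · intro b _ hb
      have hb' : (b : ℕ) ≠ (i : ℕ) - 1 := fun hc => hb (Fin.ext hc)
      have hz : stdJ n i b = 0 := by
        simp only [stdJ, of_apply]
        split_ifs with h1 h2 <;> first | rfl | (exfalso; omega)
      simp only [of_apply, hz, zero_mul]
    · intro h; exact absurd (Finset.mem_univ _) h

/-- `𝔤𝔩(n,ℂ) + 𝔰𝔬(2n-1,ℂ) = 𝔰𝔬(2n,ℂ)`: every complex skew-symmetric `2n × 2n` matrix is a sum
of a skew-symmetric matrix commuting with `J` (an element of the embedded `𝔤𝔩(n,ℂ)`) and a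
skew-symmetric matrix whose last row and column vanish (an element of `𝔰𝔬(2n-1,ℂ)`). -/
theorem gl_add_so_eq_so (n : ℕ) (hn : 1 ≤ n) :
    {M : Matrix (Fin (2 * n)) (Fin (2 * n)) ℂ | Mᵀ = -M} =
    {M : Matrix (Fin (2 * n)) (Fin (2 * n)) ℂ |
      ∃ A B : Matrix (Fin (2 * n)) (Fin (2 * n)) ℂ, M = A + B ∧
        Aᵀ = -A ∧ A * stdJ n = stdJ n * A ∧
        Bᵀ = -B ∧
        (∀ i : Fin (2 * n), B i ⟨2 * n - 1, by omega⟩ = 0 ∧ B ⟨2 * n - 1, by omega⟩ i = 0)} := by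
  ext M
  simp only [Set.mem_setOf_eq]
  constructor
  · intro hM
    have hMe : ∀ i j, M i j = -M j i := by
      intro i j
      have := congrFun (congrFun hM j) i
      simpa [transpose_apply] using this
    have hdiag : ∀ i, M i i = 0 := by
      intro i
      have h := hMe i i
      have h2 : M i i + M i i = 0 := by linear_combination h
      exact add_self_eq_zero.mp h2
    have hlt : 2 * n - 1 < 2 * n := by omega
    have hv0 : vA n M (2 * n - 1) = 0 := by
      rw [vA, dif_pos hlt]
      exact hdiag _
    have vzero : ∀ a : ℕ, a = 2 * n - 1 → vA n M a = 0 := by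
      intro a h; rw [h]; exact hv0
    have hvMn : ∀ i : Fin (2 * n), vA n M ↑i = M i ⟨2 * n - 1, hlt⟩ := by
      intro i; rw [vA, dif_pos i.isLt]
    have hft : ∀ i j : ℕ, i < 2 * n → j < 2 * n → fA n M j i = -fA n M i j := by
      intro i j hi hj
      simp only [fA]
      split_ifs <;>
        first
          | rfl
          | (exfalso; omega)
          | (exact congrArg _ (by omega))
          | (exact neg_inj.mpr (congrArg _ (by omega)))
          | (simp only [neg_neg]; exact congrArg _ (by omega))
          | (simp only [neg_neg]; exact neg_inj.mpr (congrArg _ (by omega)))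
          | simp
          | (rw [vzero i (by omega), vzero j (by omega)]; simp)
          | (rw [vzero (j + 1) (by omega), vzero (i + 1) (by omega)]; simp)
          | (rw [vzero (i + 1) (by omega), vzero (j + 1) (by omega)]; simp)
          | (rw [vzero (j - 1) (by omega), vzero (i - 1) (by omega)]; simp)
    have hfc : ∀ i j : ℕ, i < 2 * n → j < 2 * n →
        (if j % 2 = 0 then fA n M i (j + 1) else -fA n M i (j - 1)) =
          (if i % 2 = 0 then -fA n M (i + 1) j else fA n M (i - 1) j) := by
      intro i j hi hj
      simp only [fA]
      split_ifs <;>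
        first
          | rfl
          | (exfalso; omega)
          | (exact congrArg _ (by omega))
          | (exact neg_inj.mpr (congrArg _ (by omega)))
          | (simp only [neg_neg]; exact congrArg _ (by omega))
          | (simp only [neg_neg]; exact neg_inj.mpr (congrArg _ (by omega)))
          | simp
          | (rw [vzero (j + 1) (by omega), vzero (i + 1) (by omega)]; simp)
          | (rw [vzero (i + 1) (by omega), vzero (j + 1) (by omega)]; simp)
    have hrow : ∀ j : Fin (2 * n), fA n M (2 * n - 1) ↑j = M ⟨2 * n - 1, hlt⟩ j := by
      intro j
      by_cases h1 : (j : ℕ) = 2 * n - 1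
      · have hj : j = ⟨2 * n - 1, hlt⟩ := Fin.ext h1
        simp only [fA, if_pos h1, hv0, hj]
        exact (hdiag _).symm
      · by_cases h2 : (j : ℕ) = 2 * n - 2
        · have h2n : 2 * n - 2 < 2 * n := by omega
          have hj : j = (⟨2 * n - 2, h2n⟩ : Fin (2 * n)) := Fin.ext h2
          subst hj
          have hv2 : vA n M (2 * n - 2) =
              M (⟨2 * n - 2, h2n⟩ : Fin (2 * n)) ⟨2 * n - 1, hlt⟩ :=
            hvMn ⟨2 * n - 2, h2n⟩
          have key : fA n M (2 * n - 1) (2 * n - 2) = -vA n M (2 * n - 2) := by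
            unfold fA
            rw [if_neg (by omega : ¬ 2 * n - 2 = 2 * n - 1), if_pos rfl,
              if_neg (by omega : ¬ (2 * n - 1) % 2 = 0),
              show 2 * n - 1 - 1 = 2 * n - 2 by omega]
          show fA n M (2 * n - 1) (2 * n - 2) =
            M ⟨2 * n - 1, hlt⟩ (⟨2 * n - 2, h2n⟩ : Fin (2 * n))
          rw [key, hv2]
          exact (hMe _ _).symm
        · simp only [fA, if_neg h1, if_neg h2, if_pos rfl, hvMn j]
          exact (hMe _ _).symm
    have hcol : ∀ i : Fin (2 * n), fA n M ↑i (2 * n - 1) = M i ⟨2 * n - 1, hlt⟩ := by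
      intro i
      simp only [fA, if_pos rfl]
      exact hvMn i
    set A : Matrix (Fin (2 * n)) (Fin (2 * n)) ℂ :=
      Matrix.of (fun i j : Fin (2 * n) => fA n M ↑i ↑j) with hAdef
    have hAt : Aᵀ = -A := by
      ext i j
      simp only [hAdef, transpose_apply, neg_apply, of_apply]
      exact hft ↑i ↑j i.isLt j.isLt
    have hAJ : A * stdJ n = stdJ n * A := by
      ext i j
      rw [hAdef, mul_stdJ_apply, stdJ_mul_apply]
      exact hfc ↑i ↑j i.isLt j.isLt
    refine ⟨A, M - A, by abel, hAt, hAJ, ?_, ?_⟩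
    · rw [transpose_sub, hM, hAt]
      abel
    · intro i
      constructor
      · simp only [Matrix.sub_apply, hAdef, of_apply]
        rw [sub_eq_zero]
        exact (hcol i).symm
      · simp only [Matrix.sub_apply, hAdef, of_apply]
        rw [sub_eq_zero]
        exact (hrow i).symm
  · rintro ⟨A, B, rfl, hA, -, hB, -⟩
    rw [transpose_add, hA, hB]
    abel
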